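/- On an atomless probability space, if (X_n) is a sequence of independent random variables each taking values 0 and 1 with probability 1/2, then the set A = {X ∈ L⁰₊ : ∃ n, X ≤ n·X_n a.e.} is solid and radially bounded but not tight. -/

import Mathlib

open MeasureTheory Filter
open scoped ENNReal

variable {Ω : Type*} [MeasurableSpace Ω]

/-- `A ⊆ L⁰₊` is solid: `X ∈ A` and `0 ≤ Y ≤ X` (a.e.) imply `Y ∈ A`. -/
def Solid (P : Measure Ω) (A : Set (Ω → ℝ)) : Prop :=
  ∀ X ∈ A, ∀ Y : Ω → ℝ, (∀ᵐ ω ∂P, 0 ≤ Y ω ∧ Y ω ≤ X ω) → Y ∈ A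

/-- Radial boundedness for a set of positive random variables: every ray through a
nonzero element eventually leaves the set. -/
def RadiallyBoundedPos (P : Measure Ω) (A : Set (Ω → ℝ)) : Prop :=
  ∀ X ∈ A, P {ω | 0 < X ω} ≠ 0 →
    ∃ Λ > (0 : ℝ), ∀ l : ℝ, Λ < l → (fun ω => l * X ω) ∉ A

/-- Tightness (boundedness in probability) for a set of positive random variables. -/
def TightPos (P : Measure Ω) (A : Set (Ω → ℝ)) : Prop :=
  ∀ ε > (0 : ℝ), ∃ M > (0 : ℝ), ∀ X ∈ A, P {ω | M < X ω} < ENNReal.ofReal ε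

/-- Radial boundedness for a general set of random variables. -/
def RadiallyBounded (P : Measure Ω) (A : Set (Ω → ℝ)) : Prop :=
  ∀ X ∈ A, P {ω | X ω ≠ 0} ≠ 0 →
    ∃ Λ > (0 : ℝ), ∀ l : ℝ, Λ < l → (fun ω => l * X ω) ∉ A

/-- Tightness (boundedness in probability) for a general set of random variables. -/
def Tight (P : Measure Ω) (A : Set (Ω → ℝ)) : Prop :=
  ∀ ε > (0 : ℝ), ∃ M > (0 : ℝ), ∀ X ∈ A, P {ω | M < |X ω|} < ENNReal.ofReal ε

/-- Membership in the closure of `A` for the (metrizable) topology of convergence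
in probability. -/
def InClosure (P : Measure Ω) (A : Set (Ω → ℝ)) (X : Ω → ℝ) : Prop :=
  ∃ Y : ℕ → Ω → ℝ, (∀ n, Y n ∈ A) ∧ TendstoInMeasure P Y atTop X

/-- The set of positive random variables dominated by `n·Xₙ` for some `n`. -/
def dominatedSet (P : Measure Ω) (X : ℕ → Ω → ℝ) : Set (Ω → ℝ) :=
  {Y | (∀ᵐ ω ∂P, 0 ≤ Y ω) ∧ ∃ n : ℕ, ∀ᵐ ω ∂P, Y ω ≤ (n : ℝ) * X n ω}

/-- On an atomless probability space, if `(Xₙ)` are independent with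
`P(Xₙ = 0) = P(Xₙ = 1) = 1/2`, then `A = {Y ∈ L⁰₊ : ∃ n, Y ≤ n·Xₙ a.e.}` is solid and
radially bounded but not tight. -/
theorem stmt11 (P : Measure Ω) [IsProbabilityMeasure P]
    (hatomless : ∀ E : Set Ω, MeasurableSet E → P E ≠ 0 →
      ∃ F ⊆ E, MeasurableSet F ∧ P F ≠ 0 ∧ P F ≠ P E)
    (X : ℕ → Ω → ℝ) (hmeas : ∀ n, Measurable (X n))
    (hindep : ProbabilityTheory.iIndepFun X P)
    (h0 : ∀ n, P {ω | X n ω = 0} = 1 / 2) (h1 : ∀ n, P {ω | X n ω = 1} = 1 / 2) :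
    Solid P (dominatedSet P X) ∧ RadiallyBoundedPos P (dominatedSet P X) ∧
      ¬ TightPos P (dominatedSet P X) := by
  have hpre : ∀ m : ℕ, X m ⁻¹' {1} = {ω | X m ω = 1} := by
    intro m; ext ω; simp
  -- each X n is a.e. {0,1}-valued
  have hae01 : ∀ n, ∀ᵐ ω ∂P, X n ω = 0 ∨ X n ω = 1 := by
    intro n
    have hms : MeasurableSet ({ω | X n ω = 0} ∪ {ω | X n ω = 1}) :=
      ((hmeas n) (measurableSet_singleton 0)).union ((hmeas n) (measurableSet_singleton 1))
    have hd : Disjoint {ω | X n ω = 0} {ω | X n ω = 1} := by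
      rw [Set.disjoint_left]
      intro ω hω0 hω1
      simp only [Set.mem_setOf_eq] at hω0 hω1
      rw [hω0] at hω1; norm_num at hω1
    have hu : P ({ω | X n ω = 0} ∪ {ω | X n ω = 1}) = 1 := by
      rw [measure_union hd ((hmeas n) (measurableSet_singleton 1)), h0 n, h1 n]
      exact ENNReal.add_halves 1
    have hcompl : P ({ω | X n ω = 0} ∪ {ω | X n ω = 1})ᶜ = 0 :=
      (prob_compl_eq_zero_iff hms).2 hu
    rw [ae_iff]
    refine measure_mono_null ?_ hcompl
    intro ω hω
    simp only [Set.mem_setOf_eq, not_or] at hω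
    simp only [Set.mem_compl_iff, Set.mem_union, Set.mem_setOf_eq, not_or]
    exact hω
  refine ⟨?_, ?_, ?_⟩
  · -- Solid
    rintro Z ⟨hZ0, n, hZn⟩ Y hY
    refine ⟨?_, n, ?_⟩
    · filter_upwards [hY] with ω h using h.1
    · filter_upwards [hY, hZn] with ω h hz using le_trans h.2 hz
  · -- RadiallyBoundedPos
    rintro Z ⟨hZ0, n₀, hZn₀⟩ hpos
    obtain ⟨k, hk⟩ : ∃ k : ℕ, P {ω | 1 / ((k : ℝ) + 1) < Z ω} ≠ 0 := by
      by_contra h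
      push_neg at h
      apply hpos
      refine measure_mono_null ?_ (measure_iUnion_null h)
      intro ω hω
      simp only [Set.mem_setOf_eq] at hω
      obtain ⟨k, hk⟩ := exists_nat_one_div_lt hω
      exact Set.mem_iUnion.2 ⟨k, hk⟩
    set δ : ℝ := 1 / ((k : ℝ) + 1) with hδdef
    have hδpos : 0 < δ := by positivity
    set S := {ω | δ < Z ω} with hSdef
    have hS : P S ≠ 0 := hk
    set Mset : Set ℕ := {m | P (S \ {ω | X m ω = 1}) = 0} with hMdef
    have hfin : Mset.Finite := by
      by_contra hinf
      obtain ⟨j, hj⟩ : ∃ j : ℕ, (2⁻¹ : ℝ≥0∞) ^ j < P S := ENNReal.exists_inv_two_pow_lt hS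
      obtain ⟨t, hts, htcard⟩ := (show Mset.Infinite from hinf).exists_subset_card_eq j
      have hcap : P (⋂ m ∈ t, X m ⁻¹' {1}) = (2⁻¹ : ℝ≥0∞) ^ j := by
        rw [hindep.measure_inter_preimage_eq_mul t (fun i (_ : i ∈ t) =>
          (measurableSet_singleton (1 : ℝ)))]
        have : ∀ i ∈ t, P (X i ⁻¹' {1}) = (2⁻¹ : ℝ≥0∞) := by
          intro i _
          rw [hpre i, h1 i, one_div]
        rw [Finset.prod_congr rfl this, Finset.prod_const, htcard]
      have hle : P S ≤ P (⋂ m ∈ t, X m ⁻¹' {1}) := by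
        have hsub : S ⊆ (⋂ m ∈ t, X m ⁻¹' {1}) ∪ (⋃ m ∈ t, S \ {ω | X m ω = 1}) := by
          intro ω hω
          by_cases h : ∀ m ∈ t, X m ω = 1
          · left
            refine Set.mem_iInter₂.2 fun m hm => ?_
            rw [hpre m]
            exact h m hm
          · right
            push_neg at h
            obtain ⟨m, hm, hm1⟩ := h
            exact Set.mem_iUnion₂.2 ⟨m, hm, hω, hm1⟩
        have hnull : P (⋃ m ∈ t, S \ {ω | X m ω = 1}) = 0 :=
          (measure_biUnion_null_iff t.countable_toSet).2 fun m hm => hts hm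
        calc P S ≤ P ((⋂ m ∈ t, X m ⁻¹' {1}) ∪ (⋃ m ∈ t, S \ {ω | X m ω = 1})) :=
              measure_mono hsub
          _ ≤ P (⋂ m ∈ t, X m ⁻¹' {1}) + P (⋃ m ∈ t, S \ {ω | X m ω = 1}) :=
              measure_union_le _ _
          _ = P (⋂ m ∈ t, X m ⁻¹' {1}) := by rw [hnull, add_zero]
      rw [hcap] at hle
      exact absurd hj (not_lt.mpr hle)
    obtain ⟨B, hB⟩ : ∃ B : ℕ, ∀ m ∈ Mset, m ≤ B := by
      rcases hfin.bddAbove with ⟨B, hB⟩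
      exact ⟨B, fun m hm => hB hm⟩
    refine ⟨((B : ℝ) + 1) / δ, by positivity, ?_⟩
    rintro l hl ⟨hl0, m, hlm⟩
    have hlpos : 0 < l := lt_trans (by positivity) hl
    have hNnull : P {ω | ¬ (l * Z ω ≤ (m : ℝ) * X m ω ∧ (X m ω = 0 ∨ X m ω = 1))} = 0 := by
      have := hlm.and (hae01 m)
      rwa [ae_iff] at this
    have hmM : m ∈ Mset := by
      refine measure_mono_null ?_ hNnull
      intro ω hω
      simp only [Set.mem_diff, Set.mem_setOf_eq, hSdef] at hω ⊢
      rintro ⟨hle, h01⟩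
      rcases h01 with h | h
      · rw [h, mul_zero] at hle
        have : 0 < l * Z ω := mul_pos hlpos (lt_trans hδpos hω.1)
        linarith
      · exact hω.2 h
    obtain ⟨ω, hωS, hωle, hω01⟩ :
        ∃ ω, ω ∈ S ∧ l * Z ω ≤ (m : ℝ) * X m ω ∧ (X m ω = 0 ∨ X m ω = 1) := by
      by_contra h
      push_neg at h
      apply hS
      refine measure_mono_null ?_ hNnull
      intro ω hω
      simp only [Set.mem_setOf_eq]
      intro hc
      rcases hc.2 with h' | h'
      · exact (h ω hω hc.1).1 h'
      · exact (h ω hω hc.1).2 h'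
    have hZω : δ < Z ω := hωS
    have hXm1 : X m ω = 1 := by
      rcases hω01 with h | h
      · exfalso
        rw [h, mul_zero] at hωle
        have : 0 < l * Z ω := mul_pos hlpos (lt_trans hδpos hZω)
        linarith
      · exact h
    rw [hXm1, mul_one] at hωle
    have hlδ : l * δ ≤ (m : ℝ) := le_trans (le_of_lt (by nlinarith)) hωle
    have hmB : (m : ℝ) ≤ (B : ℝ) := Nat.cast_le.mpr (hB m hmM)
    have hBl : (B : ℝ) + 1 < l * δ := by
      rw [div_lt_iff₀ hδpos] at hl
      linarith
    linarith
  · -- not TightPos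
    intro ht
    obtain ⟨M, hM0, hM⟩ := ht (1 / 2) (by norm_num)
    obtain ⟨n, hn⟩ := exists_nat_gt M
    have hmem : (fun ω => (n : ℝ) * X n ω) ∈ dominatedSet P X := by
      refine ⟨?_, n, Filter.Eventually.of_forall fun ω => le_rfl⟩
      filter_upwards [hae01 n] with ω h
      rcases h with h | h <;> simp [h]
    have hsub : {ω | X n ω = 1} ⊆ {ω | M < (n : ℝ) * X n ω} := by
      intro ω h
      simp only [Set.mem_setOf_eq] at h ⊢
      rw [h, mul_one]
      exact hn
    have hge : ENNReal.ofReal (1 / 2) ≤ P {ω | M < (n : ℝ) * X n ω} := by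
      have h2 : ENNReal.ofReal (1 / 2) = (1 / 2 : ℝ≥0∞) := by
        rw [ENNReal.ofReal_div_of_pos (by norm_num), ENNReal.ofReal_one,
          ENNReal.ofReal_ofNat]
      rw [h2]
      calc (1 / 2 : ℝ≥0∞) = P {ω | X n ω = 1} := (h1 n).symm
        _ ≤ _ := measure_mono hsub
    exact absurd (hM _ hmem) (not_lt.mpr hge)
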